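/- For all real x > 0, Γ(x+1) < (x^x/e^x)·√(2πx)·exp(ψ'(x)/12). -/

import Mathlib

open Real Filter Topology Asymptotics

noncomputable def trigamma (x : ℝ) : ℝ :=
  iteratedDeriv 2 (fun y => Real.log (Real.Gamma y)) x

open Set Finset Nat

lemma contDiffAt_RGamma {x : ℝ} (hx : 0 < x) : ContDiffAt ℝ ⊤ Real.Gamma x := by
  have hU : IsOpen {s : ℂ | 0 < s.re} := isOpen_lt continuous_const Complex.continuous_re
  have hd : DifferentiableOn ℂ Complex.Gamma {s : ℂ | 0 < s.re} := by
    intro s hs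
    refine (Complex.differentiableAt_Gamma s ?_).differentiableWithinAt
    intro m hm
    simp only [Set.mem_setOf_eq, hm] at hs
    simp at hs
    linarith [hs, Nat.cast_nonneg (α := ℝ) m]
  have ha : AnalyticAt ℂ Complex.Gamma (x : ℂ) := hd.analyticAt (hU.mem_nhds (by simpa using hx))
  have hc : ContDiffAt ℝ ⊤ Complex.Gamma (x : ℂ) := (ha.contDiffAt).restrict_scalars ℝ
  have : ContDiffAt ℝ ⊤ (fun y : ℝ => (Complex.Gamma (y : ℂ)).re) x :=
    Complex.reCLM.contDiff.contDiffAt.comp x (hc.comp x Complex.ofRealCLM.contDiff.contDiffAt)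
  refine this.congr_of_eventuallyEq ?_
  filter_upwards with y
  rw [Complex.Gamma_ofReal, Complex.ofReal_re]

lemma contDiffOn_logGamma : ContDiffOn ℝ (⊤ : ℕ∞) (fun y => Real.log (Real.Gamma y)) (Ioi 0) :=
  fun y hy =>
    (((contDiffAt_RGamma hy).of_le le_top).log
      (Real.Gamma_pos_of_pos hy).ne').contDiffWithinAt

lemma diffAt_logGamma {y : ℝ} (hy : 0 < y) :
    DifferentiableAt ℝ (fun t => Real.log (Real.Gamma t)) y :=
  (((contDiffAt_RGamma hy).of_le le_top).log (Real.Gamma_pos_of_pos hy).ne').differentiableAt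
    one_ne_zero

lemma diffAt_deriv_logGamma {y : ℝ} (hy : 0 < y) :
    DifferentiableAt ℝ (deriv (fun t => Real.log (Real.Gamma t))) y := by
  have h := (contDiffOn_infty_iff_deriv_of_isOpen isOpen_Ioi).mp contDiffOn_logGamma
  exact ((h.2.differentiableOn (by simp)).differentiableAt
    (isOpen_Ioi.mem_nhds hy))

lemma deriv_logGamma_rec {y : ℝ} (hy : 0 < y) :
    deriv (fun t => Real.log (Real.Gamma t)) (y + 1)
      = deriv (fun t => Real.log (Real.Gamma t)) y + y⁻¹ := by
  set f := fun t => Real.log (Real.Gamma t) with hf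
  have hev : (fun z => f (z + 1)) =ᶠ[𝓝 y] fun z => Real.log z + f z := by
    filter_upwards [Ioi_mem_nhds hy] with z hz
    simp only [hf]
    rw [Real.Gamma_add_one (ne_of_gt hz),
      Real.log_mul (ne_of_gt hz) (Real.Gamma_pos_of_pos hz).ne']
  calc deriv f (y + 1) = deriv (fun z => f (z + 1)) y := (deriv_comp_add_const f 1 y).symm
    _ = deriv (fun z => Real.log z + f z) y := hev.deriv_eq
    _ = deriv f y + y⁻¹ := by
        rw [deriv_fun_add (Real.differentiableAt_log hy.ne') (diffAt_logGamma hy),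
          Real.deriv_log, add_comm]

lemma trigamma_eq (x : ℝ) :
    trigamma x = deriv (deriv (fun t => Real.log (Real.Gamma t))) x := by
  rw [trigamma, iteratedDeriv_succ, iteratedDeriv_one]

lemma trigamma_rec {y : ℝ} (hy : 0 < y) :
    trigamma y = (y ^ 2)⁻¹ + trigamma (y + 1) := by
  set f := fun t => Real.log (Real.Gamma t) with hf
  have hev : (fun z => deriv f (z + 1)) =ᶠ[𝓝 y] fun z => deriv f z + z⁻¹ := by
    filter_upwards [Ioi_mem_nhds hy] with z hz
    exact deriv_logGamma_rec hz
  have h1 : deriv (deriv f) (y + 1) = deriv (deriv f) y + -(y ^ 2)⁻¹ := by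
    calc deriv (deriv f) (y + 1) = deriv (fun z => deriv f (z + 1)) y :=
          (deriv_comp_add_const (deriv f) 1 y).symm
      _ = deriv (fun z => deriv f z + z⁻¹) y := hev.deriv_eq
      _ = deriv (deriv f) y + -(y ^ 2)⁻¹ := by
          rw [deriv_fun_add (diffAt_deriv_logGamma hy) (differentiableAt_inv hy.ne'), deriv_inv]
  rw [trigamma_eq, trigamma_eq, ← hf, h1]; ring

lemma trigamma_nonneg {y : ℝ} (hy : 0 < y) : 0 ≤ trigamma y := by
  set f := fun t => Real.log (Real.Gamma t) with hf
  have hconv : ConvexOn ℝ (Ioi 0) f := by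
    have := Real.convexOn_log_Gamma
    exact this
  have hmono : MonotoneOn (deriv f) (Ioi 0) :=
    hconv.monotoneOn_deriv fun z hz => diffAt_logGamma hz
  have hd : HasDerivAt (deriv f) (deriv (deriv f) y) y := (diffAt_deriv_logGamma hy).hasDerivAt
  have hslope : Tendsto (slope (deriv f) y) (𝓝[>] y) (𝓝 (deriv (deriv f) y)) :=
    (hasDerivAt_iff_tendsto_slope.mp hd).mono_left
      (nhdsWithin_mono y fun z hz => ne_of_gt hz)
  rw [trigamma_eq]
  refine ge_of_tendsto hslope ?_
  filter_upwards [self_mem_nhdsWithin] with z hz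
  have hz' : y < z := hz
  have : deriv f y ≤ deriv f z := hmono hy (lt_trans hy hz') hz'.le
  rw [slope_def_field]
  have := div_nonneg (sub_nonneg.mpr this) (sub_nonneg.mpr hz'.le)
  simpa [div_eq_mul_inv] using this

lemma trigamma_sum_eq {x : ℝ} (hx : 0 < x) (n : ℕ) :
    trigamma x = (∑ k ∈ Finset.range n, ((x + k) ^ 2)⁻¹) + trigamma (x + n) := by
  induction n with
  | zero => simp
  | succ n ih =>
      have hxn : 0 < x + n := by positivity
      rw [ih, trigamma_rec hxn, Finset.sum_range_succ]
      push_cast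
      rw [← add_assoc, add_assoc x (n:ℝ) 1]

lemma sum_inv_sq_le_trigamma {x : ℝ} (hx : 0 < x) (n : ℕ) :
    ∑ k ∈ Finset.range n, ((x + k) ^ 2)⁻¹ ≤ trigamma x := by
  have h := trigamma_sum_eq hx n
  have h2 : (0:ℝ) ≤ trigamma (x + n) := trigamma_nonneg (by positivity)
  linarith

lemma summable_inv_sq {x : ℝ} (hx : 0 < x) : Summable (fun k : ℕ => ((x + k) ^ 2)⁻¹) :=
  summable_of_sum_range_le (fun k => by positivity) (sum_inv_sq_le_trigamma hx)

lemma tsum_inv_sq_le_trigamma {x : ℝ} (hx : 0 < x) :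
    ∑' k : ℕ, ((x + k) ^ 2)⁻¹ ≤ trigamma x :=
  Real.tsum_le_of_sum_range_le (fun k => by positivity) (sum_inv_sq_le_trigamma hx)

lemma log_ratio_lower {u : ℝ} (h0 : 0 ≤ u) (h1 : u < 1) :
    2 * u ≤ Real.log (1 + u) - Real.log (1 - u) := by
  set χ : ℝ → ℝ := fun t => Real.log (1 + t) - Real.log (1 - t) - 2 * t with hχ
  have hmono : MonotoneOn χ (Ico 0 1) := by
    refine monotoneOn_of_deriv_nonneg (convex_Ico 0 1) ?_ ?_ ?_
    · refine ContinuousOn.sub (ContinuousOn.sub ?_ ?_) (continuous_const.mul continuous_id).continuousOn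
      · exact (continuous_const.add continuous_id).continuousOn.log fun t ht => by
          simp only [Set.mem_Ico] at ht; simp only [Pi.add_apply, id_eq]; nlinarith [ht.1]
      · exact (continuous_const.sub continuous_id).continuousOn.log fun t ht => by
          simp only [Set.mem_Ico] at ht; simp only [Pi.sub_apply, id_eq]; nlinarith [ht.2]
    · rw [interior_Ico]
      intro t ht
      simp only [Set.mem_Ioo] at ht
      have e1 : (1:ℝ) + t ≠ 0 := by nlinarith [ht.1]
      have e2 : (1:ℝ) - t ≠ 0 := by nlinarith [ht.2]
      exact ((((hasDerivAt_id t).const_add 1).log e1).sub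
        (((hasDerivAt_id t).const_sub 1).log e2)).sub
        ((hasDerivAt_id t).const_mul 2) |>.differentiableAt.differentiableWithinAt
    · rw [interior_Ico]
      intro t ht
      simp only [Set.mem_Ioo] at ht
      have e1 : (0:ℝ) < 1 + t := by linarith
      have e2 : (0:ℝ) < 1 - t := by linarith
      have hd0 := ((((hasDerivAt_id t).const_add 1).log e1.ne').sub
        (((hasDerivAt_id t).const_sub 1).log e2.ne')).sub
        ((hasDerivAt_id t).const_mul 2)
      have hd : HasDerivAt χ (2 * t ^ 2 / ((1 + t) * (1 - t))) t := by
        refine hd0.congr_deriv ?_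
        simp only [id_eq]
        field_simp
        ring
      rw [hd.deriv]
      positivity
  have h := hmono (Set.left_mem_Ico.mpr one_pos) (Set.mem_Ico.mpr ⟨h0, h1⟩) h0
  simp only [hχ] at h
  norm_num at h
  linarith

lemma log_ratio_upper {u : ℝ} (h0 : 0 < u) (h1 : u < 1) :
    Real.log (1 + u) - Real.log (1 - u) < 2 * u + 2 * u ^ 3 / (3 * (1 - u ^ 2)) := by
  set Phi : ℝ → ℝ := fun t => 2 * t + 2 * t ^ 3 / (3 * (1 - t ^ 2))
    - (Real.log (1 + t) - Real.log (1 - t)) with hPhi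
  have hmono : StrictMonoOn Phi (Ico 0 1) := by
    refine strictMonoOn_of_deriv_pos (convex_Ico 0 1) ?_ ?_
    · refine ContinuousOn.sub (ContinuousOn.add (continuous_const.mul continuous_id).continuousOn
        (ContinuousOn.div (continuous_const.mul (continuous_pow 3)).continuousOn
          ((continuous_const.mul (continuous_const.sub (continuous_pow 2))).continuousOn)
          fun t ht => by simp only [Set.mem_Ico] at ht; nlinarith [ht.1, ht.2])) ?_
      refine ContinuousOn.sub ?_ ?_
      · exact (continuous_const.add continuous_id).continuousOn.log fun t ht => by
          simp only [Set.mem_Ico] at ht; simp only [Pi.add_apply, id_eq]; nlinarith [ht.1]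
      · exact (continuous_const.sub continuous_id).continuousOn.log fun t ht => by
          simp only [Set.mem_Ico] at ht; simp only [Pi.sub_apply, id_eq]; nlinarith [ht.2]
    · rw [interior_Ico]
      intro t ht
      simp only [Set.mem_Ioo] at ht
      have e1 : (0:ℝ) < 1 + t := by linarith
      have e2 : (0:ℝ) < 1 - t := by linarith
      have e3 : 3 * (1 - t ^ 2) ≠ 0 := by nlinarith
      have hd0 := (((hasDerivAt_id t).const_mul 2).add
          (((hasDerivAt_pow 3 t).const_mul 2).div
            (((hasDerivAt_pow 2 t).const_sub 1).const_mul 3) e3)).sub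
        ((((hasDerivAt_id t).const_add 1).log e1.ne').sub
          (((hasDerivAt_id t).const_sub 1).log e2.ne'))
      have hd : HasDerivAt Phi (4 * t ^ 4 / (3 * ((1 + t) * (1 - t)) ^ 2)) t := by
        refine hd0.congr_deriv ?_
        norm_num
        have e4 : (1:ℝ) - t ^ 2 ≠ 0 := by nlinarith
        field_simp
        ring
      rw [hd.deriv]
      have ht0 : 0 < t := ht.1
      positivity
  have h := hmono (Set.left_mem_Ico.mpr one_pos) (Set.mem_Ico.mpr ⟨h0.le, h1⟩) h0
  simp only [hPhi] at h
  norm_num at h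
  linarith

lemma g_bounds {t : ℝ} (ht : 0 < t) :
    0 ≤ (t + 1/2) * (Real.log (t + 1) - Real.log t) - 1 ∧
      (t + 1/2) * (Real.log (t + 1) - Real.log t) - 1 < 1/12 * ((t ^ 2)⁻¹) := by
  set u : ℝ := 1 / (2 * t + 1) with hu
  have h2t : (0:ℝ) < 2 * t + 1 := by linarith
  have hu0 : 0 < u := by positivity
  have hu1 : u < 1 := by
    rw [hu, div_lt_one h2t]; linarith
  have hlog : Real.log (t + 1) - Real.log t = Real.log (1 + u) - Real.log (1 - u) := by
    have e1 : (1:ℝ) + u ≠ 0 := by positivity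
    have e2 : (1:ℝ) - u ≠ 0 := by nlinarith
    rw [← Real.log_div e1 e2, ← Real.log_div (by positivity) ht.ne']
    congr 1
    rw [hu]
    field_simp
    ring
  constructor
  · have h := log_ratio_lower hu0.le hu1
    have : (t + 1/2) * (2 * u) = 1 := by rw [hu]; field_simp
    nlinarith [log_ratio_lower hu0.le hu1]
  · have h := log_ratio_upper hu0 hu1
    have hpos : (0:ℝ) < t + 1/2 := by linarith
    have h2 : (t + 1/2) * (Real.log (1 + u) - Real.log (1 - u))
        < (t + 1/2) * (2 * u + 2 * u ^ 3 / (3 * (1 - u ^ 2))) :=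
      mul_lt_mul_of_pos_left h hpos
    have hden : (0:ℝ) < 3 * (1 - u ^ 2) := by nlinarith
    have ha : (t + 1/2) * (2 * u) = 1 := by rw [hu]; field_simp
    have hb : (t + 1/2) * (2 * u ^ 3) = u ^ 2 := by rw [hu]; field_simp
    have hc : u ^ 2 / (3 * (1 - u ^ 2)) = (12 * (t * (t + 1)))⁻¹ := by
      rw [inv_eq_one_div, div_eq_div_iff hden.ne' (by positivity : (0:ℝ) < 12 * (t * (t + 1))).ne', hu]
      field_simp
      ring
    have h3 : (t + 1/2) * (2 * u + 2 * u ^ 3 / (3 * (1 - u ^ 2))) - 1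
        = (12 * (t * (t + 1)))⁻¹ := by
      have expand : (t + 1/2) * (2 * u + 2 * u ^ 3 / (3 * (1 - u ^ 2))) - 1
          = (t + 1/2) * (2 * u) - 1 + ((t + 1/2) * (2 * u ^ 3)) / (3 * (1 - u ^ 2)) := by
        ring
      rw [expand, ha, hb, hc]
      ring
    have h4 : (12 * (t * (t + 1)))⁻¹ < 1/12 * ((t ^ 2)⁻¹) := by
      have e5 : (0:ℝ) < 12 * (t * t) := by positivity
      have : (12 * (t * (t + 1)))⁻¹ < (12 * (t * t))⁻¹ := by
        apply inv_strictAnti₀ e5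
        nlinarith
      calc (12 * (t * (t + 1)))⁻¹ < (12 * (t * t))⁻¹ := this
        _ = 1/12 * ((t ^ 2)⁻¹) := by rw [pow_two]; field_simp
    rw [hlog]
    linarith

-- Abel-summed closed form for partial sums of g
lemma sum_g_eq (x : ℝ) (n : ℕ) :
    ∑ k ∈ Finset.range n, ((x + k + 1/2) * (Real.log (x + k + 1) - Real.log (x + k)) - 1)
      = (x + n + 1/2) * Real.log (x + n) - (x + 1/2) * Real.log x
        - (∑ j ∈ Finset.range n, Real.log (x + j + 1)) - n := by
  induction n with
  | zero => simp
  | succ n ih =>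
      rw [Finset.sum_range_succ, ih, Finset.sum_range_succ]
      generalize (∑ j ∈ Finset.range n, Real.log (x + j + 1)) = S
      push_cast
      ring_nf

lemma log_GammaSeq {x : ℝ} (hx : 0 < x) {n : ℕ} (hn : 1 ≤ n) :
    Real.log (Real.GammaSeq x n) = x * Real.log n + Real.log (n !)
      - (Real.log x + ∑ j ∈ Finset.range n, Real.log (x + j + 1)) := by
  have hn0 : (0:ℝ) < n := by exact_mod_cast hn
  have hprod : ∀ j ∈ Finset.range (n+1), x + (j:ℝ) ≠ 0 := by
    intro j _; positivity
  have hp : (0:ℝ) < ∏ j ∈ Finset.range (n+1), (x + j) :=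
    Finset.prod_pos fun j _ => by positivity
  rw [Real.GammaSeq, Real.log_div (by positivity) hp.ne', Real.log_mul (by positivity)
    (by exact_mod_cast (Nat.factorial_pos n).ne'), Real.log_rpow hn0, Real.log_prod hprod,
    Finset.sum_range_succ']
  simp only [Nat.cast_add, Nat.cast_one, Nat.cast_zero, ← add_assoc, add_zero]
  push_cast
  ring

noncomputable def eps (n : ℕ) : ℝ :=
  Real.log (Stirling.stirlingSeq n) - Real.log (Real.sqrt Real.pi)

lemma log_factorial {n : ℕ} (hn : 1 ≤ n) :
    Real.log (n !) = eps n + (1/2) * Real.log Real.pi + (1/2) * Real.log 2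
      + ((n:ℝ) + 1/2) * Real.log n - n := by
  have hn0 : (0:ℝ) < n := by exact_mod_cast hn
  have hspos : 0 < Stirling.stirlingSeq n := by
    obtain ⟨k, rfl⟩ := Nat.exists_eq_add_of_le hn
    simpa [Nat.add_comm] using Stirling.stirlingSeq'_pos k
  have hfac : (n ! : ℝ) = Stirling.stirlingSeq n * (Real.sqrt (2*n) * ((n:ℝ)/Real.exp 1)^n) := by
    rw [Stirling.stirlingSeq]
    field_simp
  rw [hfac, Real.log_mul hspos.ne' (by positivity),
    Real.log_mul (by positivity) (by positivity), Real.log_sqrt (by positivity),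
    Real.log_pow, Real.log_div hn0.ne' (Real.exp_pos 1).ne', Real.log_exp,
    Real.log_mul two_ne_zero hn0.ne', eps, Real.log_sqrt Real.pi_pos.le]
  ring

lemma tendsto_eps : Tendsto eps atTop (𝓝 0) := by
  have h := (Real.continuousAt_log (Real.sqrt_pos.mpr Real.pi_pos).ne').tendsto.comp
    Stirling.tendsto_stirlingSeq_sqrt_pi
  have := h.sub_const (Real.log (Real.sqrt Real.pi))
  unfold eps
  simpa [eps, Function.comp] using this

lemma tendsto_D {x : ℝ} (hx : 0 < x) :
    Tendsto (fun n : ℕ => (x + n + 1/2) * (Real.log (x + n) - Real.log n)) atTop (𝓝 x) := by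
  have hnat : Tendsto (fun n : ℕ => (n : ℝ)) atTop atTop := tendsto_natCast_atTop_atTop
  have hden : Tendsto (fun n : ℕ => 2 * (x + n)) atTop atTop :=
    (tendsto_atTop_add_const_left _ x hnat).const_mul_atTop two_pos
  have hlow : Tendsto (fun n : ℕ => x + x / (2 * (x + n))) atTop (𝓝 x) := by
    have := Tendsto.div_atTop (tendsto_const_nhds (x := x)) hden
    simpa using tendsto_const_nhds.add this
  have hup : Tendsto (fun n : ℕ => x + x * (x + 1/2) / n) atTop (𝓝 x) := by
    have := Tendsto.div_atTop (tendsto_const_nhds (x := x * (x + 1/2))) hnat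
    simpa using tendsto_const_nhds.add this
  refine tendsto_of_tendsto_of_tendsto_of_le_of_le' hlow hup ?_ ?_
  · filter_upwards [eventually_ge_atTop 1] with n hn
    have hn0 : (0:ℝ) < n := by exact_mod_cast hn
    have hxn : (0:ℝ) < x + n := by positivity
    have hlog : x / (x + n) ≤ Real.log (x + n) - Real.log n := by
      rw [← Real.log_div hxn.ne' hn0.ne']
      have h1 : Real.log ((n:ℝ) / (x + n)) ≤ (n:ℝ)/(x+n) - 1 :=
        Real.log_le_sub_one_of_pos (by positivity)
      have h2 : Real.log ((x+n)/n) = - Real.log ((n:ℝ)/(x+n)) := by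
        rw [← Real.log_inv]; congr 1; field_simp
      have h3 : (1:ℝ) - (n:ℝ)/(x+n) = x/(x+n) := by field_simp; ring
      rw [h2]; linarith
    have heq : (x + n + 1/2) * (x / (x + n)) = x + x / (2 * (x + n)) := by
      field_simp
    calc x + x / (2 * (x + n)) = (x + n + 1/2) * (x / (x + n)) := heq.symm
      _ ≤ (x + n + 1/2) * (Real.log (x + n) - Real.log n) := by
          apply mul_le_mul_of_nonneg_left hlog (by positivity)
  · filter_upwards [eventually_ge_atTop 1] with n hn
    have hn0 : (0:ℝ) < n := by exact_mod_cast hn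
    have hxn : (0:ℝ) < x + n := by positivity
    have hlog : Real.log (x + n) - Real.log n ≤ x / n := by
      rw [← Real.log_div hxn.ne' hn0.ne']
      have h1 : Real.log ((x+n)/n) ≤ (x+n)/n - 1 := Real.log_le_sub_one_of_pos (by positivity)
      have h3 : (x+n)/(n:ℝ) - 1 = x/n := by field_simp; ring
      linarith
    have heq : (x + n + 1/2) * (x / n) = x + x * (x + 1/2) / n := by
      field_simp; ring
    calc (x + n + 1/2) * (Real.log (x + n) - Real.log n)
        ≤ (x + n + 1/2) * (x / n) := mul_le_mul_of_nonneg_left hlog (by positivity)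
      _ = x + x * (x + 1/2) / n := heq

lemma F_lt {x : ℝ} (hx : 0 < x) :
    Real.log (Real.Gamma x) - (1/2) * Real.log Real.pi - (1/2) * Real.log 2
      - (x - 1/2) * Real.log x + x < 1/12 * trigamma x := by
  set L := Real.log (Real.Gamma x) - (1/2) * Real.log Real.pi - (1/2) * Real.log 2
      - (x - 1/2) * Real.log x + x with hL
  have hpos : ∀ k : ℕ, (0:ℝ) < x + k := fun k => by positivity
  have hS : Tendsto (fun n => ∑ k ∈ Finset.range n,
      ((x + k + 1/2) * (Real.log (x + k + 1) - Real.log (x + k)) - 1)) atTop (𝓝 L) := by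
    have hkey : (fun n : ℕ => Real.log (Real.GammaSeq x n) - eps n - (1/2) * Real.log Real.pi
        - (1/2) * Real.log 2 - (x - 1/2) * Real.log x
        + (x + n + 1/2) * (Real.log (x + n) - Real.log n))
        =ᶠ[atTop] (fun n => ∑ k ∈ Finset.range n,
          ((x + k + 1/2) * (Real.log (x + k + 1) - Real.log (x + k)) - 1)) := by
      filter_upwards [eventually_ge_atTop 1] with n hn
      rw [sum_g_eq, log_GammaSeq hx hn, log_factorial hn]
      ring
    have hlogGS : Tendsto (fun n => Real.log (Real.GammaSeq x n)) atTop
        (𝓝 (Real.log (Real.Gamma x))) :=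
      (Real.continuousAt_log (Real.Gamma_pos_of_pos hx).ne').tendsto.comp
        (Real.GammaSeq_tendsto_Gamma x)
    have h2 : Tendsto (fun n : ℕ => Real.log (Real.GammaSeq x n) - eps n
        - (1/2) * Real.log Real.pi - (1/2) * Real.log 2 - (x - 1/2) * Real.log x
        + (x + n + 1/2) * (Real.log (x + n) - Real.log n)) atTop
        (𝓝 (Real.log (Real.Gamma x) - 0 - (1/2) * Real.log Real.pi - (1/2) * Real.log 2
          - (x - 1/2) * Real.log x + x)) :=
      ((((hlogGS.sub tendsto_eps).sub tendsto_const_nhds).sub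
        tendsto_const_nhds).sub tendsto_const_nhds).add (tendsto_D hx)
    have h3 := h2.congr' hkey
    simpa [hL] using h3
  have hsummable : Summable (fun k : ℕ =>
      (x + k + 1/2) * (Real.log (x + k + 1) - Real.log (x + k)) - 1) :=
    Summable.of_nonneg_of_le (fun k => (g_bounds (hpos k)).1)
      (fun k => ((g_bounds (hpos k)).2).le) ((summable_inv_sq hx).mul_left (1/12))
  have htsum : ∑' k : ℕ, ((x + k + 1/2) * (Real.log (x + k + 1) - Real.log (x + k)) - 1) = L :=
    ((hsummable.hasSum_iff_tendsto_nat).mpr hS).tsum_eq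
  have hstrict : ∑' k : ℕ, ((x + k + 1/2) * (Real.log (x + k + 1) - Real.log (x + k)) - 1)
      < ∑' k : ℕ, 1/12 * (((x + k) ^ 2)⁻¹) := by
    refine Summable.tsum_lt_tsum_of_nonneg (i := 0) (fun k => (g_bounds (hpos k)).1)
      (fun k => ((g_bounds (hpos k)).2).le) ?_ ((summable_inv_sq hx).mul_left (1/12))
    simpa using (g_bounds (hpos 0)).2
  have hfin : ∑' k : ℕ, 1/12 * (((x + k) ^ 2)⁻¹) ≤ 1/12 * trigamma x := by
    rw [tsum_mul_left]
    have := tsum_inv_sq_le_trigamma hx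
    linarith
  linarith [htsum ▸ hstrict]


theorem stmt19 (x : ℝ) (hx : 0 < x) :
    Real.Gamma (x + 1) <
      x ^ x / Real.exp x * Real.sqrt (2 * Real.pi * x) * Real.exp (trigamma x / 12) := by
  have hmain := F_lt hx
  have hL : Real.Gamma (x + 1) = Real.exp (Real.log x + Real.log (Real.Gamma x)) := by
    rw [Real.Gamma_add_one hx.ne', Real.exp_add, Real.exp_log hx,
      Real.exp_log (Real.Gamma_pos_of_pos hx)]
  have hsqrt : Real.sqrt (2 * Real.pi * x) = Real.exp ((1/2) * Real.log (2 * Real.pi * x)) := by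
    rw [show (1/2) * Real.log (2 * Real.pi * x) = Real.log (2 * Real.pi * x) / 2 by ring,
      ← Real.log_sqrt (by positivity), Real.exp_log (Real.sqrt_pos.mpr (by positivity))]
  have hxx : x ^ x = Real.exp (Real.log x * x) := Real.rpow_def_of_pos hx x
  have hR : x ^ x / Real.exp x * Real.sqrt (2 * Real.pi * x) * Real.exp (trigamma x / 12)
      = Real.exp (Real.log x * x - x + (1/2) * Real.log (2 * Real.pi * x) + trigamma x / 12) := by
    rw [hxx, hsqrt, ← Real.exp_sub, ← Real.exp_add, ← Real.exp_add]
  have hlog2πx : Real.log (2 * Real.pi * x) = Real.log 2 + Real.log Real.pi + Real.log x := by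
    rw [Real.log_mul (by positivity) hx.ne', Real.log_mul two_ne_zero Real.pi_pos.ne']
  rw [hL, hR]
  apply Real.exp_lt_exp.mpr
  rw [hlog2πx]
  linarith
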